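/- For every n ≥ 2 and every k with 2 ≤ k ≤ n, the derivation zₙ z_{n−1} ⋯ zₖ ∂/∂z_{k−1} belongs to the smallest Lie subalgebra of the derivations of ℂ[z₁,…,zₙ] containing U, V and W. -/

import Mathlib

open MvPolynomial

/-- The polynomial vector field `f ∂/∂zₖ`: the derivation of `ℂ[z₁,…,zₙ]`
sending the coordinate `zₖ` to `f` and all other coordinates to `0`. -/
noncomputable def der (n : ℕ) (f : MvPolynomial (Fin n) ℂ) (k : Fin n) :
    Derivation ℂ (MvPolynomial (Fin n) ℂ) (MvPolynomial (Fin n) ℂ) :=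
  MvPolynomial.mkDerivation ℂ (Pi.single k f)

/-- `U = ∂/∂zₙ`  (coordinates are `0`-indexed: `zₖ = X ⟨k-1,_⟩`). -/
noncomputable def U (n : ℕ) :
    Derivation ℂ (MvPolynomial (Fin n) ℂ) (MvPolynomial (Fin n) ℂ) :=
  MvPolynomial.mkDerivation ℂ (fun i => if (i : ℕ) = n - 1 then 1 else 0)

/-- `V = ∂/∂zₙ + zₙ³ ∂/∂z_{n−1} + zₙ z_{n−1}³ ∂/∂z_{n−2} + ⋯ + zₙ z_{n−1} ⋯ z₃ z₂³ ∂/∂z₁`,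
i.e. `V(zₙ) = 1` and `V(zₖ) = zₙ z_{n−1} ⋯ z_{k+2} · z_{k+1}³` for `1 ≤ k ≤ n−1`
(in `0`-indexed coordinates: `V(X i) = (∏_{j > i+1} X j) * (X (i+1))³` for `i + 1 < n`). -/
noncomputable def V (n : ℕ) :
    Derivation ℂ (MvPolynomial (Fin n) ℂ) (MvPolynomial (Fin n) ℂ) :=
  MvPolynomial.mkDerivation ℂ (fun i =>
    if h : (i : ℕ) + 1 < n then
      (∏ j ∈ Finset.univ.filter (fun j : Fin n => (i : ℕ) + 1 < (j : ℕ)), X j) *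
        (X (⟨(i : ℕ) + 1, h⟩ : Fin n)) ^ 3
    else 1)

/-- `W = z₁² ⋯ z_{n−1}² zₙ ∂/∂zₙ`. -/
noncomputable def W (n : ℕ) :
    Derivation ℂ (MvPolynomial (Fin n) ℂ) (MvPolynomial (Fin n) ℂ) :=
  MvPolynomial.mkDerivation ℂ (fun i =>
    if (i : ℕ) = n - 1 then
      (∏ j ∈ Finset.univ.filter (fun j : Fin n => (j : ℕ) < n - 1), (X j) ^ 2) * X i
    else 0)

variable {n : ℕ}

lemma der_apply_X (f : MvPolynomial (Fin n) ℂ) (k i : Fin n) :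
    der n f k (X i) = if i = k then f else 0 := by
  rw [der, mkDerivation_X, Pi.single_apply]

lemma der_one_eq_pderiv (s : Fin n) : der n (1 : MvPolynomial (Fin n) ℂ) s = pderiv s := by
  rw [der, pderiv_def]

lemma der_smul (c : ℂ) (f : MvPolynomial (Fin n) ℂ) (m : Fin n) :
    der n (c • f) m = c • der n f m := by
  apply derivation_ext
  intro i
  rw [Derivation.smul_apply, der_apply_X, der_apply_X]
  split
  · rfl
  · rw [smul_zero]

lemma bracket_pd (s : Fin n)
    (D : Derivation ℂ (MvPolynomial (Fin n) ℂ) (MvPolynomial (Fin n) ℂ)) (i : Fin n) :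
    ⁅der n 1 s, D⁆ (X i) = pderiv s (D (X i)) := by
  rw [Derivation.commutator_apply, der_one_eq_pderiv]
  have h0 : D ((pderiv s) (X i)) = 0 := by
    rcases eq_or_ne i s with h | h
    · rw [h, pderiv_X_self, Derivation.map_one_eq_zero]
    · rw [pderiv_X_of_ne h, map_zero]
  rw [h0, sub_zero]

lemma bracket_pd_der (s : Fin n) (f : MvPolynomial (Fin n) ℂ) (m : Fin n) :
    ⁅der n 1 s, der n f m⁆ = der n (pderiv s f) m := by
  apply derivation_ext
  intro i
  rw [bracket_pd, der_apply_X, der_apply_X]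
  split
  · rfl
  · exact map_zero _

lemma prod_X_eq_monomial (s : Finset (Fin n)) :
    (∏ j ∈ s, (X j : MvPolynomial (Fin n) ℂ)) =
      monomial (∑ j ∈ s, Finsupp.single j 1) 1 := by
  classical
  induction s using Finset.induction with
  | empty => simp
  | @insert a s h ih =>
      rw [Finset.prod_insert h, Finset.sum_insert h, ih, X, monomial_mul, mul_one]

lemma sum_single_apply (s : Finset (Fin n)) (t : Fin n) :
    (∑ j ∈ s, Finsupp.single j (1:ℕ)) t = if t ∈ s then 1 else 0 := by
  classical
  rw [Finsupp.finset_sum_apply]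
  rw [Finset.sum_congr rfl (fun j _ => Finsupp.single_apply (a := j) (b := (1:ℕ)) (a' := t))]
  exact Finset.sum_ite_eq' s t (fun _ => 1)

/-- The exponent of the monomial `(V - U) (X i)` (when `i+1 < n`). -/
noncomputable def expo (n : ℕ) (i : Fin n) (h : (i : ℕ) + 1 < n) : Fin n →₀ ℕ :=
  (∑ j ∈ Finset.univ.filter (fun j : Fin n => (i : ℕ) + 1 < (j : ℕ)), Finsupp.single j 1)
    + Finsupp.single (⟨(i : ℕ) + 1, h⟩ : Fin n) 3

lemma expo_apply (i : Fin n) (h : (i : ℕ) + 1 < n) (k : Fin n) :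
    expo n i h k =
      (if (i : ℕ) + 1 < (k : ℕ) then 1 else 0) + (if (k : ℕ) = (i : ℕ) + 1 then 3 else 0) := by
  rw [expo, Finsupp.add_apply, sum_single_apply, Finsupp.single_apply]
  congr 1
  · simp [Finset.mem_filter]
  · simp [Fin.ext_iff, eq_comm]

/-- The exponent after taking two derivatives in direction `m+1`. -/
noncomputable def expo2 (n : ℕ) (m : Fin n) : Fin n →₀ ℕ :=
  ∑ j ∈ Finset.univ.filter (fun j : Fin n => (m : ℕ) + 1 ≤ (j : ℕ)), Finsupp.single j 1

/-- The exponent after taking three derivatives in direction `m+1`. -/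
noncomputable def expo3 (n : ℕ) (m : Fin n) : Fin n →₀ ℕ :=
  ∑ j ∈ Finset.univ.filter (fun j : Fin n => (m : ℕ) + 1 < (j : ℕ)), Finsupp.single j 1

lemma expo2_apply (m : Fin n) (k : Fin n) :
    expo2 n m k = if (m : ℕ) + 1 ≤ (k : ℕ) then 1 else 0 := by
  rw [expo2, sum_single_apply]
  simp [Finset.mem_filter]

lemma expo3_apply (m : Fin n) (k : Fin n) :
    expo3 n m k = if (m : ℕ) + 1 < (k : ℕ) then 1 else 0 := by
  rw [expo3, sum_single_apply]
  simp [Finset.mem_filter]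

lemma E_apply_X (i : Fin n) :
    (V n - U n) (X i) =
      if h : (i : ℕ) + 1 < n then monomial (expo n i h) 1 else 0 := by
  rw [Derivation.sub_apply, U, V, mkDerivation_X, mkDerivation_X]
  have hlt := i.isLt
  split_ifs with h h1 h1
  · omega
  · rw [sub_zero, prod_X_eq_monomial, X_pow_eq_monomial, monomial_mul, one_mul, expo]
  · exact sub_self 1
  · omega

lemma key2 (m : Fin n) (hm : (m : ℕ) + 1 < n) :
    ⁅der n 1 ⟨(m : ℕ) + 1, hm⟩, ⁅der n 1 ⟨(m : ℕ) + 1, hm⟩, V n - U n⁆⁆ =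
      der n (monomial (expo2 n m) 6) m := by
  set t : Fin n := ⟨(m : ℕ) + 1, hm⟩ with ht
  apply derivation_ext
  intro i
  rw [bracket_pd, bracket_pd, E_apply_X, der_apply_X]
  by_cases hi : (i : ℕ) + 1 < n
  · rw [dif_pos hi]
    by_cases him : i = m
    · subst him
      rw [if_pos rfl, pderiv_monomial, pderiv_monomial]
      have het : expo n i hi t = 3 := by
        rw [expo_apply]; simp [ht]
      have h2 : ((expo n i hi - Finsupp.single t 1 : Fin n →₀ ℕ)) t = 2 := by
        rw [Finsupp.tsub_apply, het, Finsupp.single_apply, if_pos rfl]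
      have hexp : expo n i hi - Finsupp.single t 1 - Finsupp.single t 1 = expo2 n i := by
        ext k
        rw [Finsupp.tsub_apply, Finsupp.tsub_apply, expo_apply, expo2_apply,
          Finsupp.single_apply]
        rcases eq_or_ne t k with rfl | hk
        · simp [ht, Fin.lt_iff_val_lt_val]
        · have : (k : ℕ) ≠ (i : ℕ) + 1 := by
            intro hkk; exact hk (Fin.ext (by simp [ht, hkk]))
          rw [if_neg hk, if_neg this]
          split_ifs <;> omega
      rw [hexp, het, h2]
      norm_num
    · rw [if_neg him, pderiv_monomial, pderiv_monomial]
      have hv : expo n i hi t ≤ 1 := by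
        have hne : (i : ℕ) ≠ (m : ℕ) := fun e => him (Fin.ext e)
        rw [expo_apply]
        have : ((t : Fin n) : ℕ) ≠ (i : ℕ) + 1 := by simp [ht]; omega
        rw [if_neg this]
        split_ifs <;> omega
      have h0 : ((expo n i hi - Finsupp.single t 1 : Fin n →₀ ℕ)) t = 0 := by
        rw [Finsupp.tsub_apply, Finsupp.single_apply, if_pos rfl]
        omega
      rw [h0]
      norm_num
  · rw [dif_neg hi]
    have him : i ≠ m := by
      intro e; subst e; exact hi hm
    rw [if_neg him, map_zero, map_zero]

lemma key1 (m : Fin n) (hm : (m : ℕ) + 1 < n) :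
    ⁅der n 1 ⟨(m : ℕ) + 1, hm⟩, der n (monomial (expo2 n m) 6) m⁆ =
      der n (monomial (expo3 n m) 6) m := by
  rw [bracket_pd_der, pderiv_monomial]
  have h1 : expo2 n m ⟨(m : ℕ) + 1, hm⟩ = 1 := by rw [expo2_apply]; simp
  have h2 : expo2 n m - Finsupp.single ⟨(m : ℕ) + 1, hm⟩ 1 = expo3 n m := by
    ext k
    rw [Finsupp.tsub_apply, expo2_apply, expo3_apply, Finsupp.single_apply]
    by_cases hk : (⟨(m : ℕ) + 1, hm⟩ : Fin n) = k
    · rw [if_pos hk, ← hk]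
      simp
    · rw [if_neg hk]
      have : (k : ℕ) ≠ (m : ℕ) + 1 := by
        intro hkk; exact hk (Fin.ext (by simp [hkk]))
      split_ifs <;> omega
  rw [h1, h2]
  norm_num

lemma strip (Sp : LieSubalgebra ℂ (Derivation ℂ (MvPolynomial (Fin n) ℂ) (MvPolynomial (Fin n) ℂ))) :
    ∀ (N : ℕ) (d : Fin n →₀ ℕ), (∑ k, d k) ≤ N → ∀ (c : ℂ), c ≠ 0 → ∀ (m : Fin n),
      (∀ j, d j ≠ 0 → der n 1 j ∈ Sp) → der n (monomial d c) m ∈ Sp →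
      der n 1 m ∈ Sp := by
  intro N
  induction N with
  | zero =>
      intro d hd c hc m _ hmem
      have hd0 : d = 0 := by
        ext k
        have := Finset.sum_eq_zero_iff.mp (Nat.le_zero.mp hd) k (Finset.mem_univ k)
        simpa using this
      subst hd0
      have h1 : (monomial (0 : Fin n →₀ ℕ)) c = c • (1 : MvPolynomial (Fin n) ℂ) := by
        rw [smul_eq_C_mul, mul_one, C_apply]
      rw [h1, der_smul] at hmem
      have := Sp.smul_mem c⁻¹ hmem
      rwa [smul_smul, inv_mul_cancel₀ hc, one_smul] at this
  | succ N ih =>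
      intro d hd c hc m hsupp hmem
      by_cases hd0 : d = 0
      · subst hd0
        have h1 : (monomial (0 : Fin n →₀ ℕ)) c = c • (1 : MvPolynomial (Fin n) ℂ) := by
          rw [smul_eq_C_mul, mul_one, C_apply]
        rw [h1, der_smul] at hmem
        have := Sp.smul_mem c⁻¹ hmem
        rwa [smul_smul, inv_mul_cancel₀ hc, one_smul] at this
      · obtain ⟨j, hj⟩ : ∃ j, d j ≠ 0 := by
          by_contra hco
          push_neg at hco
          exact hd0 (Finsupp.ext fun k => hco k)
        have hb := Sp.lie_mem (hsupp j hj) hmem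
        rw [bracket_pd_der, pderiv_monomial] at hb
        have hj' : ∀ k ∈ Finset.univ.erase j, ((d - Finsupp.single j 1 : Fin n →₀ ℕ)) k = d k := by
          intro k hk
          rw [Finsupp.tsub_apply, Finsupp.single_apply,
            if_neg (Ne.symm (Finset.mem_erase.mp hk).1), tsub_zero]
        have hsum : (∑ k, ((d - Finsupp.single j 1 : Fin n →₀ ℕ)) k) ≤ N := by
          have h1 : d j + ∑ k ∈ Finset.univ.erase j, d k = ∑ k, d k :=
            Finset.add_sum_erase Finset.univ (fun k => d k) (Finset.mem_univ j)
          have h2 : ((d - Finsupp.single j 1 : Fin n →₀ ℕ)) j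
              + ∑ k ∈ Finset.univ.erase j, ((d - Finsupp.single j 1 : Fin n →₀ ℕ)) k
              = ∑ k, ((d - Finsupp.single j 1 : Fin n →₀ ℕ)) k :=
            Finset.add_sum_erase Finset.univ _ (Finset.mem_univ j)
          have h3 : ∑ k ∈ Finset.univ.erase j, ((d - Finsupp.single j 1 : Fin n →₀ ℕ)) k
              = ∑ k ∈ Finset.univ.erase j, d k := Finset.sum_congr rfl hj'
          have h4 : ((d - Finsupp.single j 1 : Fin n →₀ ℕ)) j = d j - 1 := by
            rw [Finsupp.tsub_apply, Finsupp.single_apply, if_pos rfl]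
          omega
        refine ih (d - Finsupp.single j 1) hsum (c * (d j : ℂ))
          (mul_ne_zero hc (Nat.cast_ne_zero.mpr hj)) m ?_ hb
        intro k hk
        apply hsupp k
        intro hdk
        apply hk
        rw [Finsupp.tsub_apply, hdk]
        simp

lemma pd_top (m : Fin n) (h : (m : ℕ) = n - 1) : der n 1 m = U n := by
  apply derivation_ext
  intro i
  rw [der_apply_X, U, mkDerivation_X]
  by_cases hi : (i : ℕ) = n - 1
  · rw [if_pos hi, if_pos (Fin.ext (hi.trans h.symm))]
  · rw [if_neg hi, if_neg (fun e => hi (by rw [e, h]))]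

lemma hU_mem : U n ∈ LieSubalgebra.lieSpan ℂ
    (Derivation ℂ (MvPolynomial (Fin n) ℂ) (MvPolynomial (Fin n) ℂ)) {U n, V n, W n} :=
  LieSubalgebra.subset_lieSpan (by simp)

lemma hV_mem : V n ∈ LieSubalgebra.lieSpan ℂ
    (Derivation ℂ (MvPolynomial (Fin n) ℂ) (MvPolynomial (Fin n) ℂ)) {U n, V n, W n} :=
  LieSubalgebra.subset_lieSpan (by simp)

lemma pd_mem : ∀ (k : ℕ) (m : Fin n), n - 1 - (m : ℕ) ≤ k →
    der n 1 m ∈ LieSubalgebra.lieSpan ℂ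
      (Derivation ℂ (MvPolynomial (Fin n) ℂ) (MvPolynomial (Fin n) ℂ)) {U n, V n, W n} := by
  intro k
  induction k with
  | zero =>
      intro m hm
      have h : (m : ℕ) = n - 1 := by have := m.isLt; omega
      rw [pd_top m h]
      exact hU_mem
  | succ k ih =>
      intro m hm
      by_cases h : (m : ℕ) = n - 1
      · rw [pd_top m h]
        exact hU_mem
      · have hm1 : (m : ℕ) + 1 < n := by have := m.isLt; omega
        set Sp := LieSubalgebra.lieSpan ℂ
          (Derivation ℂ (MvPolynomial (Fin n) ℂ) (MvPolynomial (Fin n) ℂ)) {U n, V n, W n}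
        have ht : der n 1 ⟨(m : ℕ) + 1, hm1⟩ ∈ Sp := ih ⟨(m : ℕ) + 1, hm1⟩ (by simp; omega)
        have hE : V n - U n ∈ Sp := Sp.sub_mem hV_mem hU_mem
        have h3 : der n (monomial (expo3 n m) 6) m ∈ Sp := by
          have := Sp.lie_mem ht (Sp.lie_mem ht (Sp.lie_mem ht hE))
          rwa [key2 m hm1, key1 m hm1] at this
        refine strip Sp (∑ q, expo3 n m q) (expo3 n m) le_rfl 6 (by norm_num) m ?_ h3
        intro j hj
        have hjm : (m : ℕ) + 1 < (j : ℕ) := by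
          by_contra hco
          rw [expo3_apply, if_neg hco] at hj
          exact hj rfl
        exact ih j (by omega)

/-- For every `n ≥ 2` and every `k` with `2 ≤ k ≤ n`, the derivation
`zₙ z_{n−1} ⋯ zₖ ∂/∂z_{k−1}` lies in the smallest Lie subalgebra of the derivations of
`ℂ[z₁,…,zₙ]` containing `U`, `V`, `W`.  (`0`-indexed: for `i = k − 1 ≥ 1` the field is
`(∏_{j ≥ i} X j) ∂/∂(X (i−1))`.) -/
theorem tail_product_shear_mem_lieSpan_UVW (n : ℕ) (hn : 2 ≤ n) (i : Fin n)
    (hi : 1 ≤ (i : ℕ)) :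
    der n (∏ j ∈ Finset.univ.filter (fun j : Fin n => (i : ℕ) ≤ (j : ℕ)), X j)
        (⟨(i : ℕ) - 1, lt_of_le_of_lt (Nat.sub_le _ _) i.isLt⟩ : Fin n) ∈
      LieSubalgebra.lieSpan ℂ (Derivation ℂ (MvPolynomial (Fin n) ℂ) (MvPolynomial (Fin n) ℂ))
        {U n, V n, W n} := by
  set m : Fin n := (⟨(i : ℕ) - 1, lt_of_le_of_lt (Nat.sub_le _ _) i.isLt⟩ : Fin n) with hmdef
  set Sp := LieSubalgebra.lieSpan ℂ
    (Derivation ℂ (MvPolynomial (Fin n) ℂ) (MvPolynomial (Fin n) ℂ)) {U n, V n, W n} with hSp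
  have hmval : (m : ℕ) + 1 = (i : ℕ) := by simp [hmdef]; omega
  have hm1 : (m : ℕ) + 1 < n := by rw [hmval]; exact i.isLt
  have ht : der n 1 ⟨(m : ℕ) + 1, hm1⟩ ∈ Sp := pd_mem n ⟨(m : ℕ) + 1, hm1⟩ (by omega)
  have hE : V n - U n ∈ Sp := Sp.sub_mem hV_mem hU_mem
  have h2 : der n (monomial (expo2 n m) 6) m ∈ Sp := by
    have := Sp.lie_mem ht (Sp.lie_mem ht hE)
    rwa [key2 m hm1] at this
  have hexp : expo2 n m =
      ∑ j ∈ Finset.univ.filter (fun j : Fin n => (i : ℕ) ≤ (j : ℕ)), Finsupp.single j 1 := by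
    rw [expo2, hmval]
  have hmon : (monomial (expo2 n m)) (6 : ℂ) = (6 : ℂ) • (monomial (expo2 n m)) (1 : ℂ) := by
    rw [smul_monomial, smul_eq_mul, mul_one]
  rw [hmon, der_smul] at h2
  have h1 := Sp.smul_mem (6⁻¹ : ℂ) h2
  rw [smul_smul] at h1
  norm_num at h1
  rw [prod_X_eq_monomial, ← hexp]
  exact h1
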